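/- Let S be a data independent memory system all of whose traces are causal, let Ω be a simple witness, and fix k with 1 ≤ k ≤ min{n,m}. Then there is a canonical k-nice cycle in G(Ω)(τ) for some unambiguous trace τ of S(n,m) if and only if there is a trace τ' of S(n,m,2) such that τ' satisfies Constrain_k(j) for all 1 ≤ j ≤ m and τ' satisfies Check_k(i) for all 1 ≤ i ≤ k. -/

import Mathlib

/-- A memory operation: read or write. -/
inductive MemOp : Type
  | R : MemOp
  | W : MemOp
deriving DecidableEq

/-- A memory event ⟨op, proc, loc, data⟩. -/
structure MemEvent : Type where
  op : MemOp
  proc : ℕ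
  loc : ℕ
  data : ℕ
deriving DecidableEq

instance : Inhabited MemEvent := ⟨⟨MemOp.R, 1, 1, 0⟩⟩

/-- A trace is a finite sequence of memory events (1-indexed via `ev`). -/
abbrev MTrace := List MemEvent

/-- The x-th event of a trace (1-indexed). -/
def ev (τ : MTrace) (x : ℕ) : MemEvent := τ.getD (x - 1) default

/-- dom(τ) = {1, …, |τ|}. -/
def Dom (τ : MTrace) : Set ℕ := {x | 1 ≤ x ∧ x ≤ τ.length}

/-- P(τ,i): indices of events of processor i. -/
def Pset (τ : MTrace) (i : ℕ) : Set ℕ := {x | x ∈ Dom τ ∧ (ev τ x).proc = i}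

/-- L(τ,j): indices of events to location j. -/
def Lset (τ : MTrace) (j : ℕ) : Set ℕ := {x | x ∈ Dom τ ∧ (ev τ x).loc = j}

/-- L^w(τ,j): indices of write events to location j. -/
def Lw (τ : MTrace) (j : ℕ) : Set ℕ := {x | x ∈ Lset τ j ∧ (ev τ x).op = MemOp.W}

/-- L^r(τ,j): indices of read events to location j. -/
def Lr (τ : MTrace) (j : ℕ) : Set ℕ := {x | x ∈ Lset τ j ∧ (ev τ x).op = MemOp.R}

/-- A trace is unambiguous if every write event has a nonzero data value distinct
from that of every other write event to the same location. -/
def Unambiguous (τ : MTrace) : Prop :=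
  ∀ j, ∀ x ∈ Lw τ j, (ev τ x).data ≠ 0 ∧
    ∀ y ∈ Lw τ j, y ≠ x → (ev τ y).data ≠ (ev τ x).data

/-- A trace is causal if the data value of every read event is 0 or equals the data
value of some write event to the same location. -/
def Causal (τ : MTrace) : Prop :=
  ∀ j, ∀ x ∈ Lr τ j, (ev τ x).data = 0 ∨ ∃ y ∈ Lw τ j, (ev τ y).data = (ev τ x).data

/-- ⟨x,y⟩ ∈ M(τ,i): the total order on P(τ,i) given by index order. -/
def Mrel (τ : MTrace) (i : ℕ) (x y : ℕ) : Prop :=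
  x ∈ Pset τ i ∧ y ∈ Pset τ i ∧ x < y

/-- A sequence of memory events (given by its length and 1-indexed access function)
is serial: each event's data value equals that of the latest write to the same
location at an index no larger than its own, and equals 0 if no such write exists. -/
def SerialFn (len : ℕ) (e : ℕ → MemEvent) : Prop :=
  ∀ u, 1 ≤ u → u ≤ len →
    ((∀ k, 1 ≤ k → k ≤ u → ¬((e k).op = MemOp.W ∧ (e k).loc = (e u).loc)) →
       (e u).data = 0) ∧
    (∀ k, 1 ≤ k → k ≤ u → (e k).op = MemOp.W → (e k).loc = (e u).loc →
       (∀ k', k < k' → k' ≤ u → ¬((e k').op = MemOp.W ∧ (e k').loc = (e u).loc)) →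
       (e u).data = (e k).data)

/-- f (with inverse g) is a permutation of {1,…,|τ|} satisfying conditions C1 and C2. -/
def IsSCWitness (τ : MTrace) (f g : ℕ → ℕ) : Prop :=
  (∀ u ∈ Dom τ, f u ∈ Dom τ) ∧
  (∀ u ∈ Dom τ, g u ∈ Dom τ) ∧
  (∀ u ∈ Dom τ, g (f u) = u) ∧
  (∀ u ∈ Dom τ, f (g u) = u) ∧
  (∀ i u v, Mrel τ i u v → f u < f v) ∧
  SerialFn τ.length (fun x => ev τ (g x))

/-- A trace is sequentially consistent if some permutation satisfies C1 and C2. -/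
def SeqConsistent (τ : MTrace) : Prop := ∃ f g, IsSCWitness τ f g

/-- A witness assigns to each trace and location a strict total order on L^w(τ,j). -/
def IsWitness (Ω : MTrace → ℕ → ℕ → ℕ → Prop) : Prop :=
  ∀ τ j,
    (∀ x y, Ω τ j x y → x ∈ Lw τ j ∧ y ∈ Lw τ j) ∧
    (∀ x, ¬ Ω τ j x x) ∧
    (∀ x y z, Ω τ j x y → Ω τ j y z → Ω τ j x z) ∧
    (∀ x y, x ∈ Lw τ j → y ∈ Lw τ j → x ≠ y → Ω τ j x y ∨ Ω τ j y x)

/-- A witness is simple if it orders the writes to each location by index order. -/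
def IsSimple (Ω : MTrace → ℕ → ℕ → ℕ → Prop) : Prop :=
  ∀ τ j x y, Ω τ j x y ↔ (x ∈ Lw τ j ∧ y ∈ Lw τ j ∧ x < y)

/-- ⟨x,y⟩ ∈ Ω^e(τ,j): the extension of the witness order to all events to location j. -/
def OmegaE (Ω : MTrace → ℕ → ℕ → ℕ → Prop) (τ : MTrace) (j x y : ℕ) : Prop :=
  x ∈ Lset τ j ∧ y ∈ Lset τ j ∧
  (((ev τ x).data = (ev τ y).data ∧ (ev τ x).op = MemOp.W ∧ (ev τ y).op = MemOp.R) ∨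
   ((ev τ x).data = 0 ∧ (ev τ y).data ≠ 0) ∨
   (∃ a b, a ∈ Lw τ j ∧ b ∈ Lw τ j ∧ Ω τ j a b ∧
      (ev τ a).data = (ev τ x).data ∧ (ev τ b).data = (ev τ y).data))

/-- Edge of the constraint graph G(Ω)(τ): union of the M(τ,i) and the Ω^e(τ,j). -/
def GEdge (Ω : MTrace → ℕ → ℕ → ℕ → Prop) (τ : MTrace) (x y : ℕ) : Prop :=
  (∃ i, Mrel τ i x y) ∨ (∃ j, OmegaE Ω τ j x y)

/-- The constraint graph G(Ω)(τ) has a cycle. -/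
def HasCycle (Ω : MTrace → ℕ → ℕ → ℕ → Prop) (τ : MTrace) : Prop :=
  ∃ x, Relation.TransGen (GEdge Ω τ) x x

/-- The constraint graph G(Ω)(τ) is acyclic. -/
def Acyclic (Ω : MTrace → ℕ → ℕ → ℕ → Prop) (τ : MTrace) : Prop :=
  ¬ HasCycle Ω τ

/-- All events of the trace have processor in {1,…,n} and location in {1,…,m}. -/
def InRange (n m : ℕ) (τ : MTrace) : Prop :=
  ∀ e ∈ τ, 1 ≤ e.proc ∧ e.proc ≤ n ∧ 1 ≤ e.loc ∧ e.loc ≤ m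

/-- All data values in the trace lie in {0,…,v}. -/
def DataBounded (v : ℕ) (τ : MTrace) : Prop := ∀ e ∈ τ, e.data ≤ v

/-- A memory system with n processors and m locations: for each v ≥ 1, a set S(n,m,v)
of traces whose processors, locations, and data values are in range. -/
structure MemSystem (n m : ℕ) : Type where
  S : ℕ → Set MTrace
  wf : ∀ v, 1 ≤ v → ∀ τ ∈ S v, InRange n m τ ∧ DataBounded v τ

/-- S(n,m): the union of the S(n,m,v) over v ≥ 1. -/
def MemSystem.traces {n m : ℕ} (M : MemSystem n m) : Set MTrace :=
  {τ | ∃ v, 1 ≤ v ∧ τ ∈ M.S v}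

/-- A renaming function λ with λ(j,0) = 0 for every location j. -/
def IsRenaming (lam : ℕ → ℕ → ℕ) : Prop := ∀ j, lam j 0 = 0

/-- λ^d: rename the data value of each event according to its location. -/
def renameD (lam : ℕ → ℕ → ℕ) (τ : MTrace) : MTrace :=
  τ.map fun e => { e with data := lam e.loc e.data }

/-- The memory system is data independent: a trace is in S(n,m,v) iff it is obtained
from an unambiguous trace of S(n,m) by a renaming function with values in {0,…,v}. -/
def DataIndependent {n m : ℕ} (M : MemSystem n m) : Prop :=
  ∀ v, 1 ≤ v → ∀ τ, τ ∈ M.S v ↔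
    ∃ τ' lam, τ' ∈ M.traces ∧ Unambiguous τ' ∧ IsRenaming lam ∧
      (∀ j d, lam j d ≤ v) ∧ τ = renameD lam τ'

/-- λ^p: rename the processor of each event. -/
def renameP (lam : ℕ → ℕ) (τ : MTrace) : MTrace :=
  τ.map fun e => { e with proc := lam e.proc }

/-- λ^l: rename the location of each event. -/
def renameL (lam : ℕ → ℕ) (τ : MTrace) : MTrace :=
  τ.map fun e => { e with loc := lam e.loc }

/-- λ is a permutation of {1,…,n}. -/
def PermOn (n : ℕ) (lam : ℕ → ℕ) : Prop :=
  Set.BijOn lam (Set.Icc 1 n) (Set.Icc 1 n)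

/-- The memory system is processor symmetric. -/
def ProcSymmetric {n m : ℕ} (M : MemSystem n m) : Prop :=
  ∀ lam, PermOn n lam → ∀ v τ, τ ∈ M.S v → renameP lam τ ∈ M.S v

/-- The memory system is location symmetric. -/
def LocSymmetric {n m : ℕ} (M : MemSystem n m) : Prop :=
  ∀ lam, PermOn m lam → ∀ v τ, τ ∈ M.S v → renameL lam τ ∈ M.S v

/-- x ⊕ 1 in the cyclic group {1,…,k} with identity k. -/
def cyc (k x : ℕ) : ℕ := if x = k then 1 else x + 1

/-- A k-nice cycle u_1,v_1,…,u_k,v_k in G(Ω)(τ): distinct vertices; each ⟨u_x,v_x⟩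
is a processor edge, each ⟨v_x,u_{x⊕1}⟩ a location edge; no processor (resp.
location) contributes two edges. -/
def NiceCycle (Ω : MTrace → ℕ → ℕ → ℕ → Prop) (τ : MTrace) (k : ℕ)
    (u v : ℕ → ℕ) : Prop :=
  1 ≤ k ∧
  (∀ x ∈ Set.Icc 1 k, ∀ y ∈ Set.Icc 1 k, x ≠ y → u x ≠ u y) ∧
  (∀ x ∈ Set.Icc 1 k, ∀ y ∈ Set.Icc 1 k, x ≠ y → v x ≠ v y) ∧
  (∀ x ∈ Set.Icc 1 k, ∀ y ∈ Set.Icc 1 k, u x ≠ v y) ∧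
  (∀ x ∈ Set.Icc 1 k, ∃ i, Mrel τ i (u x) (v x)) ∧
  (∀ x ∈ Set.Icc 1 k, ∃ j, OmegaE Ω τ j (v x) (u (cyc k x))) ∧
  (∀ x ∈ Set.Icc 1 k, ∀ y ∈ Set.Icc 1 k, x ≠ y → ∀ i,
     Mrel τ i (u x) (v x) → ¬ Mrel τ i (u y) (v y)) ∧
  (∀ x ∈ Set.Icc 1 k, ∀ y ∈ Set.Icc 1 k, x ≠ y → ∀ j,
     OmegaE Ω τ j (v x) (u (cyc k x)) → ¬ OmegaE Ω τ j (v y) (u (cyc k y)))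

/-- A canonical k-nice cycle: a k-nice cycle whose processor edges are in M(τ,x) and
whose location edges are in Ω^e(τ,x⊕1), for x = 1,…,k. -/
def CanonicalNiceCycle (Ω : MTrace → ℕ → ℕ → ℕ → Prop) (τ : MTrace) (k : ℕ)
    (u v : ℕ → ℕ) : Prop :=
  NiceCycle Ω τ k u v ∧
  (∀ x ∈ Set.Icc 1 k, Mrel τ x (u x) (v x)) ∧
  (∀ x ∈ Set.Icc 1 k, OmegaE Ω τ (cyc k x) (v x) (u (cyc k x)))

/-- The trace satisfies the automaton Constrain_k(j). -/
def ConstrainK (k j : ℕ) (τ : MTrace) : Prop :=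
  (j ≤ k →
    (∀ x ∈ Lw τ j, (ev τ x).data ≤ 2) ∧
    (∀ x ∈ Lw τ j, ∀ y ∈ Lw τ j, (ev τ x).data = 1 → (ev τ y).data = 1 → x = y) ∧
    (∀ x ∈ Lw τ j, ∀ y ∈ Lw τ j, (ev τ x).data = 0 → (ev τ y).data ≠ 0 → x < y) ∧
    (∀ y ∈ Lw τ j, (ev τ y).data = 2 → ∃ x ∈ Lw τ j, (ev τ x).data = 1 ∧ x < y)) ∧
  (k < j → ∀ x ∈ Lw τ j, (ev τ x).data = 0)

/-- The trace satisfies the automaton Check_k(i). -/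
def CheckK (k i : ℕ) (τ : MTrace) : Prop :=
  ∃ x ∈ Dom τ, ∃ y ∈ Dom τ, x < y ∧
    (ev τ x).proc = i ∧ (ev τ x).loc = i ∧
    ((ev τ x).data = 1 ∨ (ev τ x).data = 2) ∧
    (ev τ y).proc = i ∧ (ev τ y).loc = cyc k i ∧
    ((ev τ y).data = 0 ∨ ((ev τ y).op = MemOp.W ∧ (ev τ y).data = 1))

section Helpers

lemma ev_map (f : MemEvent → MemEvent) (τ : MTrace) (x : ℕ) (h1 : 1 ≤ x) (h2 : x ≤ τ.length) :
    ev (τ.map f) x = f (ev τ x) := by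
  have hx : x - 1 < τ.length := by omega
  unfold ev
  rw [List.getD_eq_getElem _ _ (by simpa using hx), List.getD_eq_getElem _ _ hx,
    List.getElem_map]

lemma length_renameD (lam : ℕ → ℕ → ℕ) (τ : MTrace) : (renameD lam τ).length = τ.length :=
  List.length_map _

lemma Dom_renameD (lam : ℕ → ℕ → ℕ) (τ : MTrace) : Dom (renameD lam τ) = Dom τ := by
  unfold Dom; rw [length_renameD]

lemma ev_renameD (lam : ℕ → ℕ → ℕ) (τ : MTrace) (x : ℕ) (hx : x ∈ Dom τ) :
    ev (renameD lam τ) x = { ev τ x with data := lam (ev τ x).loc (ev τ x).data } :=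
  ev_map _ _ _ hx.1 hx.2

lemma ev_renameD_op (lam : ℕ → ℕ → ℕ) (τ : MTrace) (x : ℕ) (hx : x ∈ Dom τ) :
    (ev (renameD lam τ) x).op = (ev τ x).op := by rw [ev_renameD lam τ x hx]

lemma ev_renameD_proc (lam : ℕ → ℕ → ℕ) (τ : MTrace) (x : ℕ) (hx : x ∈ Dom τ) :
    (ev (renameD lam τ) x).proc = (ev τ x).proc := by rw [ev_renameD lam τ x hx]

lemma ev_renameD_loc (lam : ℕ → ℕ → ℕ) (τ : MTrace) (x : ℕ) (hx : x ∈ Dom τ) :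
    (ev (renameD lam τ) x).loc = (ev τ x).loc := by rw [ev_renameD lam τ x hx]

lemma ev_renameD_data (lam : ℕ → ℕ → ℕ) (τ : MTrace) (x : ℕ) (hx : x ∈ Dom τ) :
    (ev (renameD lam τ) x).data = lam (ev τ x).loc (ev τ x).data := by
  rw [ev_renameD lam τ x hx]

lemma Lset_renameD (lam : ℕ → ℕ → ℕ) (τ : MTrace) (j : ℕ) :
    Lset (renameD lam τ) j = Lset τ j := by
  ext x
  simp only [Lset, Set.mem_setOf_eq, Dom_renameD]
  constructor
  · rintro ⟨hd, hl⟩; exact ⟨hd, by rwa [ev_renameD_loc lam τ x hd] at hl⟩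
  · rintro ⟨hd, hl⟩; exact ⟨hd, by rw [ev_renameD_loc lam τ x hd]; exact hl⟩

lemma Lw_renameD (lam : ℕ → ℕ → ℕ) (τ : MTrace) (j : ℕ) :
    Lw (renameD lam τ) j = Lw τ j := by
  ext x
  simp only [Lw, Set.mem_setOf_eq, Lset_renameD]
  constructor
  · rintro ⟨hs, ho⟩; exact ⟨hs, by rwa [ev_renameD_op lam τ x hs.1] at ho⟩
  · rintro ⟨hs, ho⟩; exact ⟨hs, by rw [ev_renameD_op lam τ x hs.1]; exact ho⟩

lemma cyc_mem {k x : ℕ} (hx : x ∈ Set.Icc 1 k) : cyc k x ∈ Set.Icc 1 k := by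
  rcases Set.mem_Icc.mp hx with ⟨h1, h2⟩
  unfold cyc; split_ifs <;> simp [Set.mem_Icc] <;> omega

lemma cyc_inj {k x y : ℕ} (hx : x ∈ Set.Icc 1 k) (hy : y ∈ Set.Icc 1 k)
    (h : cyc k x = cyc k y) : x = y := by
  rcases Set.mem_Icc.mp hx with ⟨hx1, hx2⟩
  rcases Set.mem_Icc.mp hy with ⟨hy1, hy2⟩
  unfold cyc at h; split_ifs at h <;> omega

/-- The key backward-direction lemma: from the data patterns guaranteed by
Check/Constrain on the renamed trace, we recover an `Ω^e` edge in the
original unambiguous trace. -/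
lemma edge_of_check (τ : MTrace) (lam : ℕ → ℕ → ℕ)
    (Ω : MTrace → ℕ → ℕ → ℕ → Prop) (hS : IsSimple Ω)
    (hUn : Unambiguous τ) (hCa : Causal τ) (hRen : IsRenaming lam)
    (k j : ℕ) (hjk : j ≤ k) (hCon : ConstrainK k j (renameD lam τ))
    (v' u' : ℕ) (hv : v' ∈ Lset τ j) (hu : u' ∈ Lset τ j) (hne : v' ≠ u')
    (hvd : lam j (ev τ v').data = 0 ∨ ((ev τ v').op = MemOp.W ∧ lam j (ev τ v').data = 1))
    (hud : lam j (ev τ u').data = 1 ∨ lam j (ev τ u').data = 2) :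
    OmegaE Ω τ j v' u' := by
  classical
  have hdu0 : (ev τ u').data ≠ 0 := by
    intro h
    rw [h, hRen j] at hud
    rcases hud with h | h <;> exact absurd h (by norm_num)
  by_cases hdv0 : (ev τ v').data = 0
  · exact ⟨hv, hu, Or.inr (Or.inl ⟨hdv0, hdu0⟩)⟩
  -- obtain writes a, b carrying the data of v', u'
  have ha : ∃ a ∈ Lw τ j, (ev τ a).data = (ev τ v').data := by
    cases hop : (ev τ v').op with
    | W => exact ⟨v', ⟨hv, hop⟩, rfl⟩
    | R =>
      rcases hCa j v' ⟨hv, hop⟩ with h0 | ⟨a, haw, had⟩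
      · exact absurd h0 hdv0
      · exact ⟨a, haw, had⟩
  have hb : ∃ b ∈ Lw τ j, (ev τ b).data = (ev τ u').data := by
    cases hop : (ev τ u').op with
    | W => exact ⟨u', ⟨hu, hop⟩, rfl⟩
    | R =>
      rcases hCa j u' ⟨hu, hop⟩ with h0 | ⟨b, hbw, hbd⟩
      · exact absurd h0 hdu0
      · exact ⟨b, hbw, hbd⟩
  obtain ⟨a, haw, had⟩ := ha
  obtain ⟨b, hbw, hbd⟩ := hb
  by_cases hde : (ev τ v').data = (ev τ u').data
  · -- equal data case: v' must be a write, u' must be a read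
    have hvW : (ev τ v').op = MemOp.W ∧ lam j (ev τ v').data = 1 := by
      rcases hvd with h0 | h1
      · exfalso; rw [hde] at h0; rcases hud with h | h <;> omega
      · exact h1
    cases hop : (ev τ u').op with
    | R => exact ⟨hv, hu, Or.inl ⟨hde, hvW.1, hop⟩⟩
    | W =>
      exfalso
      exact (hUn j u' ⟨hu, hop⟩).2 v' ⟨hv, hvW.1⟩ hne hde
  · -- distinct data: find a < b and use case (iii)
    have hab : a ≠ b := by
      intro h; rw [h, hbd] at had; exact hde had.symm
    set τ' := renameD lam τ with hτ'
    have haw' : a ∈ Lw τ' j := by rw [hτ', Lw_renameD]; exact haw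
    have hbw' : b ∈ Lw τ' j := by rw [hτ', Lw_renameD]; exact hbw
    have haD : (ev τ' a).data = lam j (ev τ v').data := by
      rw [hτ', ev_renameD_data lam τ a haw.1.1, haw.1.2, had]
    have hbD : (ev τ' b).data = lam j (ev τ u').data := by
      rw [hτ', ev_renameD_data lam τ b hbw.1.1, hbw.1.2, hbd]
    have hC4 := hCon.1 hjk
    have hlt : a < b := by
      rcases hvd with h0 | ⟨hw, h1⟩
      · -- data'(a) = 0, data'(b) ≠ 0
        refine hC4.2.2.1 a haw' b hbw' (by rw [haD]; exact h0) ?_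
        rw [hbD]; rcases hud with h | h <;> omega
      · -- data'(a) = 1
        rcases hud with h1' | h2'
        · exfalso
          have := hC4.2.1 a haw' b hbw' (by rw [haD]; exact h1) (by rw [hbD]; exact h1')
          exact hab this
        · obtain ⟨c, hcw, hc1, hcb⟩ := hC4.2.2.2 b hbw' (by rw [hbD]; exact h2')
          have hca : c = a := hC4.2.1 c hcw a haw' hc1 (by rw [haD]; exact h1)
          omega
    exact ⟨hv, hu, Or.inr (Or.inr ⟨a, b, haw, hbw,
      (hS τ j a b).mpr ⟨haw, hbw, hlt⟩, had, hbd⟩)⟩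

end Helpers

/-- For a data independent memory system all of whose traces are causal,
and a simple witness Ω: some unambiguous trace of S(n,m) has a canonical k-nice cycle
iff some trace of S(n,m,2) satisfies Constrain_k(j) for all 1 ≤ j ≤ m and
Check_k(i) for all 1 ≤ i ≤ k. -/
theorem canonical_nice_cycle_iff_model_check
    (n m k : ℕ) (hn : 1 ≤ n) (hm : 1 ≤ m) (hk : 1 ≤ k) (hkm : k ≤ min n m)
    (M : MemSystem n m) (hDI : DataIndependent M) (hC : ∀ τ ∈ M.traces, Causal τ)
    (Ω : MTrace → ℕ → ℕ → ℕ → Prop) (hΩ : IsWitness Ω) (hS : IsSimple Ω) :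
    (∃ τ ∈ M.traces, Unambiguous τ ∧ ∃ u w, CanonicalNiceCycle Ω τ k u w) ↔
      (∃ τ' ∈ M.S 2, (∀ j, 1 ≤ j → j ≤ m → ConstrainK k j τ') ∧
        (∀ i, 1 ≤ i → i ≤ k → CheckK k i τ')) := by
  classical
  have hkm' : k ≤ m := le_trans hkm (min_le_right n m)
  constructor
  · -- Forward direction
    rintro ⟨τ, hτ, hUn, u, v, hCNC⟩
    obtain ⟨hNC, hMr, hOe⟩ := hCNC
    have hCa := hC τ hτ
    have hsur : ∀ j ∈ Set.Icc 1 k, ∃ x ∈ Set.Icc 1 k, cyc k x = j := by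
      intro j hj
      rcases Set.mem_Icc.mp hj with ⟨h1, h2⟩
      by_cases hj1 : j = 1
      · exact ⟨k, Set.mem_Icc.mpr ⟨hk, le_refl k⟩, by simp [cyc, hj1]⟩
      · refine ⟨j - 1, Set.mem_Icc.mpr ⟨by omega, by omega⟩, ?_⟩
        unfold cyc; split_ifs with h <;> omega
    have hPiv : ∀ j ∈ Set.Icc 1 k, ∃ w, w ∈ Lw τ j ∧
        (ev τ w).data = (ev τ (u j)).data ∧ (ev τ (u j)).data ≠ 0 := by
      intro j hj
      obtain ⟨x, hxI, hcx⟩ := hsur j hj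
      have hed := hOe x hxI
      rw [hcx] at hed
      obtain ⟨hvL, huL, hcase⟩ := hed
      rcases hcase with ⟨hd, hvW, huR⟩ | ⟨hv0, hu0⟩ | ⟨a, b, haw, hbw, hab, had, hbd⟩
      · exact ⟨v x, ⟨hvL, hvW⟩, hd, by rw [← hd]; exact (hUn j (v x) ⟨hvL, hvW⟩).1⟩
      · cases hop : (ev τ (u j)).op with
        | W => exact ⟨u j, ⟨huL, hop⟩, rfl, hu0⟩
        | R =>
          rcases hCa j (u j) ⟨huL, hop⟩ with h0 | ⟨w, hw, hwd⟩
          · exact absurd h0 hu0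
          · exact ⟨w, hw, hwd, hu0⟩
      · exact ⟨b, hbw, hbd, by rw [← hbd]; exact (hUn j b hbw).1⟩
    choose! wstar hwsW hwsD hwsN using hPiv
    set lam : ℕ → ℕ → ℕ := fun j d =>
      if j ∈ Set.Icc 1 k then
        (if d = (ev τ (wstar j)).data then 1
         else if ∃ w, w ∈ Lw τ j ∧ (ev τ w).data = d ∧ wstar j < w then 2 else 0)
      else 0 with hlam
    have hlam_def : ∀ j d, lam j d =
        if j ∈ Set.Icc 1 k then
          (if d = (ev τ (wstar j)).data then 1
           else if ∃ w, w ∈ Lw τ j ∧ (ev τ w).data = d ∧ wstar j < w then 2 else 0)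
        else 0 := fun j d => by simp only [hlam]
    have hlam_le : ∀ j d, lam j d ≤ 2 := by
      intro j d; rw [hlam_def]; split_ifs <;> omega
    have hlam_zero : IsRenaming lam := by
      intro j; rw [hlam_def]
      split_ifs with h1 h2 h3
      · exfalso
        apply hwsN j h1
        rw [← hwsD j h1, ← h2]
      · exfalso
        obtain ⟨w, hw, hwd, _⟩ := h3
        exact (hUn j w hw).1 hwd
      · rfl
      · rfl
    have hlamW : ∀ j, j ∈ Set.Icc 1 k → ∀ w ∈ Lw τ j, lam j (ev τ w).data =
        if w = wstar j then 1 else if wstar j < w then 2 else 0 := by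
      intro j hj w hw
      rw [hlam_def, if_pos hj]
      by_cases hew : w = wstar j
      · rw [if_pos (by rw [hew]), if_pos hew]
      · have hne : (ev τ w).data ≠ (ev τ (wstar j)).data :=
          (hUn j (wstar j) (hwsW j hj)).2 w hw hew
        rw [if_neg hne, if_neg hew]
        by_cases hlt : wstar j < w
        · rw [if_pos ⟨w, hw, rfl, hlt⟩, if_pos hlt]
        · rw [if_neg ?_, if_neg hlt]
          rintro ⟨w', hw', hd', hlt'⟩
          have hww : w' = w := by
            by_contra hne'
            exact (hUn j w hw).2 w' hw' hne' hd'
          omega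
    have hlamU : ∀ j, j ∈ Set.Icc 1 k → lam j (ev τ (u j)).data = 1 := by
      intro j hj
      rw [hlam_def, if_pos hj, if_pos (hwsD j hj).symm]
    refine ⟨renameD lam τ, (hDI 2 (by norm_num) _).mpr ⟨τ, lam, hτ, hUn, hlam_zero, hlam_le, rfl⟩,
      ?_, ?_⟩
    · -- Constrain
      intro j hj1 hjm
      constructor
      · intro hjk2
        have hjI : j ∈ Set.Icc 1 k := Set.mem_Icc.mpr ⟨hj1, hjk2⟩
        have hLw := Lw_renameD lam τ j
        have hDw : ∀ w ∈ Lw τ j, (ev (renameD lam τ) w).data =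
            if w = wstar j then 1 else if wstar j < w then 2 else 0 := by
          intro w hw
          rw [ev_renameD_data lam τ w hw.1.1, hw.1.2, hlamW j hjI w hw]
        refine ⟨?_, ?_, ?_, ?_⟩
        · intro x hx; rw [hLw] at hx; rw [hDw x hx]; split_ifs <;> omega
        · intro x hx y hy h1 h2
          rw [hLw] at hx hy
          rw [hDw x hx] at h1; rw [hDw y hy] at h2
          have ex : x = wstar j := by split_ifs at h1 <;> omega
          have ey : y = wstar j := by split_ifs at h2 <;> omega
          rw [ex, ey]
        · intro x hx y hy h0 hne
          rw [hLw] at hx hy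
          rw [hDw x hx] at h0; rw [hDw y hy] at hne
          have e1 : x < wstar j := by split_ifs at h0 with a b <;> omega
          have e2 : wstar j ≤ y := by
            split_ifs at hne with a b
            · omega
            · omega
            · exact absurd rfl hne
          omega
        · intro y hy h2
          rw [hLw] at hy
          rw [hDw y hy] at h2
          have hlt : wstar j < y := by split_ifs at h2 <;> omega
          refine ⟨wstar j, by rw [hLw]; exact hwsW j hjI, ?_, hlt⟩
          rw [hDw _ (hwsW j hjI), if_pos rfl]
      · intro hkj x hx
        rw [Lw_renameD] at hx
        rw [ev_renameD_data lam τ x hx.1.1, hx.1.2, hlam_def, if_neg]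
        simp only [Set.mem_Icc, not_and]
        omega
    · -- Check
      intro i hi1 hik
      have hiI : i ∈ Set.Icc 1 k := Set.mem_Icc.mpr ⟨hi1, hik⟩
      obtain ⟨⟨huDom, hup⟩, ⟨hvDom, hvp⟩, hultv⟩ := hMr i hiI
      obtain ⟨hvL, huL2, hcase⟩ := hOe i hiI
      obtain ⟨x0, hx0I, hcx0⟩ := hsur i hiI
      have hed0 := hOe x0 hx0I
      rw [hcx0] at hed0
      have huLi : u i ∈ Lset τ i := hed0.2.1
      have hcI : cyc k i ∈ Set.Icc 1 k := cyc_mem hiI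
      refine ⟨u i, by rw [Dom_renameD]; exact huDom, v i, by rw [Dom_renameD]; exact hvDom,
        hultv, ?_, ?_, ?_, ?_, ?_, ?_⟩
      · rw [ev_renameD_proc lam τ _ huDom]; exact hup
      · rw [ev_renameD_loc lam τ _ huDom]; exact huLi.2
      · left
        rw [ev_renameD_data lam τ _ huDom, huLi.2]
        exact hlamU i hiI
      · rw [ev_renameD_proc lam τ _ hvDom]; exact hvp
      · rw [ev_renameD_loc lam τ _ hvDom]; exact hvL.2
      · rcases hcase with ⟨hd, hvW, huR⟩ | ⟨hv0, hu0⟩ | ⟨a, b, haw, hbw, hab, had, hbd⟩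
        · right
          refine ⟨by rw [ev_renameD_op lam τ _ hvDom]; exact hvW, ?_⟩
          rw [ev_renameD_data lam τ _ hvDom, hvL.2, hd]
          exact hlamU (cyc k i) hcI
        · left
          rw [ev_renameD_data lam τ _ hvDom, hvL.2, hv0]
          exact hlam_zero (cyc k i)
        · left
          have hbws : b = wstar (cyc k i) := by
            by_contra hne
            exact (hUn (cyc k i) (wstar (cyc k i)) (hwsW (cyc k i) hcI)).2 b hbw hne
              (by rw [hbd, hwsD (cyc k i) hcI])
          have hltab : a < b := ((hS τ (cyc k i) a b).mp hab).2.2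
          rw [ev_renameD_data lam τ _ hvDom, hvL.2, ← had, hlamW (cyc k i) hcI a haw,
            if_neg (show ¬ a = wstar (cyc k i) by omega),
            if_neg (show ¬ wstar (cyc k i) < a by omega)]
  · -- Backward direction
    rintro ⟨τ', hτ', hCon, hChk⟩
    obtain ⟨τ, lam, hτ, hUn, hRen, hBnd, hEq⟩ := (hDI 2 (by norm_num) τ').mp hτ'
    subst hEq
    have hCa := hC τ hτ
    have hCk : ∀ i ∈ Set.Icc 1 k, ∃ x y,
        x ∈ Dom τ ∧ y ∈ Dom τ ∧ x < y ∧
        (ev τ x).proc = i ∧ (ev τ x).loc = i ∧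
        (lam i (ev τ x).data = 1 ∨ lam i (ev τ x).data = 2) ∧
        (ev τ y).proc = i ∧ (ev τ y).loc = cyc k i ∧
        (lam (cyc k i) (ev τ y).data = 0 ∨
          ((ev τ y).op = MemOp.W ∧ lam (cyc k i) (ev τ y).data = 1)) := by
      intro i hi
      rcases Set.mem_Icc.mp hi with ⟨hi1, hik⟩
      obtain ⟨x, hxD, y, hyD, hlt, hxp, hxl, hxd, hyp, hyl, hyd⟩ := hChk i hi1 hik
      rw [Dom_renameD] at hxD hyD
      rw [ev_renameD_proc lam τ x hxD] at hxp
      rw [ev_renameD_loc lam τ x hxD] at hxl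
      rw [ev_renameD_data lam τ x hxD, hxl] at hxd
      rw [ev_renameD_proc lam τ y hyD] at hyp
      rw [ev_renameD_loc lam τ y hyD] at hyl
      rw [ev_renameD_data lam τ y hyD, ev_renameD_op lam τ y hyD, hyl] at hyd
      exact ⟨x, y, hxD, hyD, hlt, hxp, hxl, hxd, hyp, hyl, hyd⟩
    choose! u v hCk' using hCk
    have huDom : ∀ x ∈ Set.Icc 1 k, u x ∈ Dom τ := fun x hx => (hCk' x hx).1
    have hvDom : ∀ x ∈ Set.Icc 1 k, v x ∈ Dom τ := fun x hx => (hCk' x hx).2.1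
    have hultv : ∀ x ∈ Set.Icc 1 k, u x < v x := fun x hx => (hCk' x hx).2.2.1
    have hupr : ∀ x ∈ Set.Icc 1 k, (ev τ (u x)).proc = x := fun x hx => (hCk' x hx).2.2.2.1
    have hulo : ∀ x ∈ Set.Icc 1 k, (ev τ (u x)).loc = x := fun x hx => (hCk' x hx).2.2.2.2.1
    have hudat : ∀ x ∈ Set.Icc 1 k,
        lam x (ev τ (u x)).data = 1 ∨ lam x (ev τ (u x)).data = 2 :=
      fun x hx => (hCk' x hx).2.2.2.2.2.1
    have hvpr : ∀ x ∈ Set.Icc 1 k, (ev τ (v x)).proc = x :=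
      fun x hx => (hCk' x hx).2.2.2.2.2.2.1
    have hvlo : ∀ x ∈ Set.Icc 1 k, (ev τ (v x)).loc = cyc k x :=
      fun x hx => (hCk' x hx).2.2.2.2.2.2.2.1
    have hvdat : ∀ x ∈ Set.Icc 1 k,
        lam (cyc k x) (ev τ (v x)).data = 0 ∨
          ((ev τ (v x)).op = MemOp.W ∧ lam (cyc k x) (ev τ (v x)).data = 1) :=
      fun x hx => (hCk' x hx).2.2.2.2.2.2.2.2
    have hMrel : ∀ x ∈ Set.Icc 1 k, Mrel τ x (u x) (v x) := by
      intro x hx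
      exact ⟨⟨huDom x hx, hupr x hx⟩, ⟨hvDom x hx, hvpr x hx⟩, hultv x hx⟩
    have hEdge : ∀ x ∈ Set.Icc 1 k, OmegaE Ω τ (cyc k x) (v x) (u (cyc k x)) := by
      intro x hx
      have hxc : cyc k x ∈ Set.Icc 1 k := cyc_mem hx
      have hne : v x ≠ u (cyc k x) := by
        by_cases hcx : cyc k x = x
        · rw [hcx]
          have := hultv x hx
          omega
        · intro h
          have h2 := hvpr x hx
          rw [h, hupr (cyc k x) hxc] at h2
          exact hcx h2
      exact edge_of_check τ lam Ω hS hUn hCa hRen k (cyc k x) (Set.mem_Icc.mp hxc).2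
        (hCon (cyc k x) (Set.mem_Icc.mp hxc).1 (le_trans (Set.mem_Icc.mp hxc).2 hkm'))
        (v x) (u (cyc k x)) ⟨hvDom x hx, hvlo x hx⟩
        ⟨huDom (cyc k x) hxc, hulo (cyc k x) hxc⟩ hne (hvdat x hx) (hudat (cyc k x) hxc)
    refine ⟨τ, hτ, hUn, u, v, ⟨hk, ?_, ?_, ?_, ?_, ?_, ?_, ?_⟩, hMrel, hEdge⟩
    · intro x hx y hy hne heq
      apply hne
      rw [← hupr x hx, heq, hupr y hy]
    · intro x hx y hy hne heq
      apply hne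
      rw [← hvpr x hx, heq, hvpr y hy]
    · intro x hx y hy
      by_cases hxy : x = y
      · subst hxy
        have := hultv x hx
        omega
      · intro h
        apply hxy
        rw [← hupr x hx, h, hvpr y hy]
    · exact fun x hx => ⟨x, hMrel x hx⟩
    · exact fun x hx => ⟨cyc k x, hEdge x hx⟩
    · intro x hx y hy hne i h1 h2
      apply hne
      have e1 : x = i := by rw [← hupr x hx]; exact h1.1.2
      have e2 : y = i := by rw [← hupr y hy]; exact h2.1.2
      omega
    · intro x hx y hy hne j h1 h2
      apply hne
      have e1 : cyc k x = j := by rw [← hvlo x hx]; exact h1.1.2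
      have e2 : cyc k y = j := by rw [← hvlo y hy]; exact h2.1.2
      exact cyc_inj hx hy (e1.trans e2.symm)
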